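/- Let I be a polynomial in the coefficients a_0, …, a_n that is homogeneous of degree g and isobaric of weight p, with n·g = 2·p. If I satisfies the differential equation D I = 0, then it also satisfies Δ I = 0. -/

import Mathlib

open MvPolynomial

open Finsupp

/-- The weight function assigning weight `i` to the coefficient variable `aᵢ`. -/
def wt (n : ℕ) : Fin (n + 1) → ℕ := fun i => (i : ℕ)

/-- The lowering operator `D A = Σ_{i=0}^{n-1} (i+1) · aᵢ · ∂A/∂a_{i+1}`. -/
noncomputable def Dop (n : ℕ) (A : MvPolynomial (Fin (n + 1)) ℚ) :
    MvPolynomial (Fin (n + 1)) ℚ :=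
  ∑ i : Fin n, C ((i : ℕ) + 1 : ℚ) * X i.castSucc * pderiv i.succ A

/-- The raising operator `Δ A = Σ_{i=0}^{n-1} (n-i) · a_{i+1} · ∂A/∂aᵢ`. -/
noncomputable def Δop (n : ℕ) (A : MvPolynomial (Fin (n + 1)) ℚ) :
    MvPolynomial (Fin (n + 1)) ℚ :=
  ∑ i : Fin n, C ((n - (i : ℕ) : ℕ) : ℚ) * X i.succ * pderiv i.castSucc A

variable {n : ℕ}

lemma X_mul_pderiv_monomial' (j k : Fin (n+1)) (d : Fin (n+1) →₀ ℕ) (c : ℚ) :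
    X j * pderiv k (monomial d c) =
      (d k : ℚ) • monomial (Finsupp.single j 1 + (d - Finsupp.single k 1)) c := by
  rw [pderiv_monomial, X, monomial_mul, smul_monomial, one_mul, smul_eq_mul, mul_comm]

lemma single_add_sub (k : Fin (n+1)) (d : Fin (n+1) →₀ ℕ) (h : 0 < d k) :
    Finsupp.single k 1 + (d - Finsupp.single k 1) = d := by
  ext i
  rcases eq_or_ne i k with rfl | hik
  · simp [Finsupp.single_apply]
    omega
  · simp [Finsupp.single_apply, Ne.symm hik]

lemma X_mul_pderiv_monomial (k : Fin (n+1)) (d : Fin (n+1) →₀ ℕ) (c : ℚ) :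
    X k * pderiv k (monomial d c) = (d k : ℚ) • monomial d c := by
  rw [X_mul_pderiv_monomial']
  rcases Nat.eq_zero_or_pos (d k) with h | h
  · simp [h]
  · rw [single_add_sub k d h]

lemma weight_eq_sum (w : Fin (n+1) → ℤ) (d : Fin (n+1) →₀ ℕ) :
    Finsupp.weight w d = ∑ k : Fin (n+1), (d k) • w k := by
  rw [Finsupp.weight_apply, Finsupp.sum_fintype]
  intro i; simp

lemma euler (w : Fin (n+1) → ℤ) {A : MvPolynomial (Fin (n+1)) ℚ} {q : ℤ}
    (h : A.IsWeightedHomogeneous w q) :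
    ∑ k : Fin (n+1), C ((w k : ℚ)) * (X k * pderiv k A) = ((q : ℚ)) • A := by
  conv_lhs => rw [A.as_sum]
  conv_rhs => rw [A.as_sum]
  simp only [map_sum, Finset.mul_sum, Finset.smul_sum]
  rw [Finset.sum_comm]
  refine Finset.sum_congr rfl fun d hd => ?_
  simp only [X_mul_pderiv_monomial]
  have hw : Finsupp.weight w d = q := h (MvPolynomial.mem_support_iff.mp hd)
  rw [weight_eq_sum] at hw
  calc ∑ k : Fin (n+1), C ((w k : ℚ)) * ((d k : ℚ) • monomial d (coeff d A))
      = ∑ k : Fin (n+1), (((d k : ℤ) • w k : ℤ) : ℚ) • monomial d (coeff d A) := by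
        refine Finset.sum_congr rfl fun k _ => ?_
        rw [smul_eq_C_mul, smul_eq_C_mul, ← mul_assoc, ← C_mul]
        congr 2
        push_cast [smul_eq_mul]; ring
    _ = ((q:ℚ)) • monomial d (coeff d A) := by
        rw [← Finset.sum_smul, ← hw]
        congr 1
        rw [Int.cast_sum]
        simp only [nsmul_eq_mul, smul_eq_mul]

lemma pderiv_comm (i j : Fin (n+1)) (A : MvPolynomial (Fin (n+1)) ℚ) :
    pderiv i (pderiv j A) = pderiv j (pderiv i A) := by
  rcases eq_or_ne i j with rfl | hij
  · rfl
  · conv_lhs => rw [A.as_sum]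
    conv_rhs => rw [A.as_sum]
    rw [map_sum, map_sum, map_sum, map_sum]
    refine Finset.sum_congr rfl fun d hd => ?_
    simp only [pderiv_monomial, Finsupp.tsub_apply, Finsupp.single_apply]
    rw [if_neg hij, if_neg (Ne.symm hij)]
    simp only [Nat.sub_zero]
    rw [tsub_tsub, tsub_tsub, add_comm (Finsupp.single j 1) (Finsupp.single i 1)]
    ring_nf


lemma pd_term (k m l : Fin (n+1)) (a : ℚ) (B : MvPolynomial (Fin (n+1)) ℚ) :
    pderiv k (C a * X m * pderiv l B) =
      (if m = k then C a * pderiv l B else 0) + C a * (X m * pderiv k (pderiv l B)) := by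
  rw [mul_assoc, pderiv_C_mul, pderiv_mul, pderiv_X, mul_add]
  congr 1
  rcases eq_or_ne m k with rfl | h
  · rw [if_pos rfl, Pi.single_eq_same, one_mul]
  · rw [if_neg h, Pi.single_eq_of_ne h, zero_mul, mul_zero]

lemma pd_Δop (A : MvPolynomial (Fin (n+1)) ℚ) (i : Fin n) :
    pderiv i.succ (Δop n A) =
      C ((n - (i:ℕ) : ℕ) : ℚ) * pderiv i.castSucc A
      + ∑ j : Fin n, C ((n - (j:ℕ) : ℕ) : ℚ) * (X j.succ * pderiv i.succ (pderiv j.castSucc A)) := by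
  rw [Δop, map_sum]
  rw [Finset.sum_congr rfl fun j _ => pd_term i.succ j.succ j.castSucc _ A]
  rw [Finset.sum_add_distrib]
  congr 1
  simp [Fin.succ_inj]

lemma pd_Dop (A : MvPolynomial (Fin (n+1)) ℚ) (i : Fin n) :
    pderiv i.castSucc (Dop n A) =
      C ((i:ℕ) + 1 : ℚ) * pderiv i.succ A
      + ∑ j : Fin n, C ((j:ℕ) + 1 : ℚ) * (X j.castSucc * pderiv i.castSucc (pderiv j.succ A)) := by
  rw [Dop, map_sum]
  rw [Finset.sum_congr rfl fun j _ => pd_term i.castSucc j.castSucc j.succ _ A]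
  rw [Finset.sum_add_distrib]
  congr 1
  simp [Fin.castSucc_inj]

set_option maxHeartbeats 1000000 in
lemma comm_lemma (A : MvPolynomial (Fin (n+1)) ℚ) :
    Dop n (Δop n A) - Δop n (Dop n A)
      = ∑ k : Fin (n+1), C ((n:ℚ) - 2*((k:ℕ):ℚ)) * (X k * pderiv k A) := by
  have e1 : Dop n (Δop n A) =
      (∑ i : Fin n, (C ((i:ℕ)+1:ℚ) * C ((n - (i:ℕ) : ℕ):ℚ)) * (X i.castSucc * pderiv i.castSucc A))
      + ∑ i : Fin n, ∑ j : Fin n, (C ((i:ℕ)+1:ℚ) * C ((n - (j:ℕ) : ℕ):ℚ)) *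
          (X i.castSucc * (X j.succ * pderiv i.succ (pderiv j.castSucc A))) := by
    rw [Dop]
    rw [Finset.sum_congr rfl fun i (_ : i ∈ Finset.univ) => by rw [pd_Δop A i]]
    rw [← Finset.sum_add_distrib]
    refine Finset.sum_congr rfl fun i _ => ?_
    rw [mul_add, Finset.mul_sum]
    congr 1
    · ring
    · exact Finset.sum_congr rfl fun j _ => by ring
  have e2 : Δop n (Dop n A) =
      (∑ i : Fin n, (C ((i:ℕ)+1:ℚ) * C ((n - (i:ℕ) : ℕ):ℚ)) * (X i.succ * pderiv i.succ A))
      + ∑ i : Fin n, ∑ j : Fin n, (C ((j:ℕ)+1:ℚ) * C ((n - (i:ℕ) : ℕ):ℚ)) *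
          (X i.succ * (X j.castSucc * pderiv i.castSucc (pderiv j.succ A))) := by
    rw [Δop]
    rw [Finset.sum_congr rfl fun i (_ : i ∈ Finset.univ) => by rw [pd_Dop A i]]
    rw [← Finset.sum_add_distrib]
    refine Finset.sum_congr rfl fun i _ => ?_
    rw [mul_add, Finset.mul_sum]
    congr 1
    · ring
    · exact Finset.sum_congr rfl fun j _ => by ring
  have e3 : (∑ i : Fin n, ∑ j : Fin n, (C ((i:ℕ)+1:ℚ) * C ((n - (j:ℕ) : ℕ):ℚ)) *
          (X i.castSucc * (X j.succ * pderiv i.succ (pderiv j.castSucc A))))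
      = ∑ i : Fin n, ∑ j : Fin n, (C ((j:ℕ)+1:ℚ) * C ((n - (i:ℕ) : ℕ):ℚ)) *
          (X i.succ * (X j.castSucc * pderiv i.castSucc (pderiv j.succ A))) := by
    rw [Finset.sum_comm]
    refine Finset.sum_congr rfl fun a _ => Finset.sum_congr rfl fun b _ => ?_
    rw [pderiv_comm]
    ring
  rw [e1, e2, e3, add_sub_add_right_eq_sub]
  have hF : (∑ i : Fin n, (C ((i:ℕ)+1:ℚ) * C ((n - (i:ℕ) : ℕ):ℚ)) * (X i.castSucc * pderiv i.castSucc A))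
      = ∑ k : Fin (n+1), C ((((k:ℕ):ℚ)+1) * ((n:ℚ) - ((k:ℕ):ℚ))) * (X k * pderiv k A) := by
    rw [Fin.sum_univ_castSucc]
    simp only [Fin.val_last, Fin.coe_castSucc, sub_self, mul_zero, map_zero, zero_mul, add_zero]
    refine (Finset.sum_congr rfl fun i _ => ?_).symm
    rw [← C_mul, Nat.cast_sub i.isLt.le]
  have hG : (∑ i : Fin n, (C ((i:ℕ)+1:ℚ) * C ((n - (i:ℕ) : ℕ):ℚ)) * (X i.succ * pderiv i.succ A))
      = ∑ k : Fin (n+1), C (((k:ℕ):ℚ) * ((n:ℚ) - ((k:ℕ):ℚ) + 1)) * (X k * pderiv k A) := by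
    rw [Fin.sum_univ_succ]
    simp only [Fin.val_succ, Fin.val_zero, Nat.cast_zero, zero_mul, map_zero, zero_add]
    refine (Finset.sum_congr rfl fun i _ => ?_).symm
    rw [← C_mul, Nat.cast_sub i.isLt.le]
    congr 1
    push_cast
    ring
  rw [hF, hG, ← Finset.sum_sub_distrib]
  refine Finset.sum_congr rfl fun k _ => ?_
  rw [← sub_mul, ← C_sub]
  congr 1
  ring

lemma weight_single_one (w : Fin (n+1) → ℤ) (j : Fin (n+1)) :
    Finsupp.weight w (Finsupp.single j 1) = w j := by
  rw [Finsupp.weight_apply, Finsupp.sum_single_index] <;> simp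

lemma X_mul_pderiv_wtd (w : Fin (n+1) → ℤ) {A : MvPolynomial (Fin (n+1)) ℚ} {q : ℤ}
    (h : A.IsWeightedHomogeneous w q) (j k : Fin (n+1)) :
    (X j * pderiv k A).IsWeightedHomogeneous w (q + w j - w k) := by
  have hrep : X j * pderiv k A = ∑ d ∈ A.support,
      ((d k : ℚ) • monomial (Finsupp.single j 1 + (d - Finsupp.single k 1)) (coeff d A)) := by
    conv_lhs => rw [A.as_sum]
    rw [map_sum, Finset.mul_sum]
    exact Finset.sum_congr rfl fun d _ => X_mul_pderiv_monomial' j k d _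
  rw [hrep]
  apply IsWeightedHomogeneous.sum
  intro d hd
  rcases Nat.eq_zero_or_pos (d k) with h0 | h0
  · rw [h0]
    simpa using isWeightedHomogeneous_zero ℚ w (q + w j - w k)
  · apply (weightedHomogeneousSubmodule ℚ w _).smul_mem
    apply isWeightedHomogeneous_monomial
    have hd' : Finsupp.weight w d = q := h (MvPolynomial.mem_support_iff.mp hd)
    have hsplit := single_add_sub k d h0
    have hsub : Finsupp.weight w (d - Finsupp.single k 1) = q - w k := by
      have h2 := congrArg (Finsupp.weight w) hsplit
      rw [map_add, weight_single_one, hd'] at h2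
      omega
    rw [map_add, weight_single_one, hsub]
    ring

lemma term_wtd (w : Fin (n+1) → ℤ) {A : MvPolynomial (Fin (n+1)) ℚ} {q : ℤ}
    (h : A.IsWeightedHomogeneous w q) (c : ℚ) (j k : Fin (n+1)) :
    (C c * X j * pderiv k A).IsWeightedHomogeneous w (q + w j - w k) := by
  rw [mul_assoc]
  simpa using (isWeightedHomogeneous_C w c).mul (X_mul_pderiv_wtd w h j k)

lemma Δop_wtd (w : Fin (n+1) → ℤ) (δ : ℤ) (hδ : ∀ i : Fin n, w i.succ = w i.castSucc + δ)
    {A : MvPolynomial (Fin (n+1)) ℚ} {q : ℤ} (h : A.IsWeightedHomogeneous w q) :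
    (Δop n A).IsWeightedHomogeneous w (q + δ) := by
  rw [Δop]
  apply IsWeightedHomogeneous.sum
  intro i _
  have := term_wtd w h ((n - (i:ℕ) : ℕ) : ℚ) i.succ i.castSucc
  rwa [hδ i, show q + (w i.castSucc + δ) - w i.castSucc = q + δ by ring] at this

lemma weight_eq_sum_nat (w : Fin (n+1) → ℕ) (d : Fin (n+1) →₀ ℕ) :
    Finsupp.weight w d = ∑ k : Fin (n+1), (d k) • w k := by
  rw [Finsupp.weight_apply, Finsupp.sum_fintype]
  intro i; simp

lemma toZwt {w : Fin (n+1) → ℕ} {A : MvPolynomial (Fin (n+1)) ℚ} {p : ℕ}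
    (h : A.IsWeightedHomogeneous w p) :
    A.IsWeightedHomogeneous (fun i => (w i : ℤ)) (p : ℤ) := by
  intro d hd
  have h1 := h hd
  rw [weight_eq_sum_nat] at h1
  rw [weight_eq_sum, ← h1]
  push_cast [nsmul_eq_mul, smul_eq_mul]
  rfl

lemma vanish {A : MvPolynomial (Fin (n+1)) ℚ} {G q : ℤ}
    (hone : A.IsWeightedHomogeneous (fun _ : Fin (n+1) => (1:ℤ)) G)
    (hwz : A.IsWeightedHomogeneous (fun i : Fin (n+1) => ((i:ℕ):ℤ)) q)
    (hq : (n:ℤ) * G < q) : A = 0 := by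
  by_contra h
  obtain ⟨d, hd⟩ := MvPolynomial.ne_zero_iff.mp h
  have h1 := hone hd
  have h2 := hwz hd
  rw [weight_eq_sum] at h1 h2
  have hle : q ≤ (n:ℤ) * G := by
    rw [← h1, ← h2, Finset.mul_sum]
    apply Finset.sum_le_sum
    intro k _
    simp only [smul_eq_mul, nsmul_eq_mul]
    have : ((k:ℕ):ℤ) ≤ (n:ℤ) := by exact_mod_cast Fin.is_le k
    nlinarith [Int.ofNat_nonneg (d k)]
  omega

lemma comm_eval {B : MvPolynomial (Fin (n+1)) ℚ} {G q : ℤ}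
    (hone : B.IsWeightedHomogeneous (fun _ : Fin (n+1) => (1:ℤ)) G)
    (hwz : B.IsWeightedHomogeneous (fun i : Fin (n+1) => ((i:ℕ):ℤ)) q) :
    Dop n (Δop n B) = Δop n (Dop n B) + (((n:ℤ) * G - 2 * q : ℤ) : ℚ) • B := by
  have h1 := euler (fun _ : Fin (n+1) => (1:ℤ)) hone
  have h2 := euler (fun i : Fin (n+1) => ((i:ℕ):ℤ)) hwz
  simp only [Int.cast_one, map_one, one_mul] at h1
  have key : ∑ k : Fin (n+1), C ((n:ℚ) - 2*((k:ℕ):ℚ)) * (X k * pderiv k B)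
      = (((n:ℤ) * G - 2 * q : ℤ) : ℚ) • B := by
    have expand : ∀ k : Fin (n+1),
        C ((n:ℚ) - 2*((k:ℕ):ℚ)) * (X k * pderiv k B)
          = (n:ℚ) • (X k * pderiv k B)
            - (2:ℚ) • (C ((((fun i : Fin (n+1) => ((i:ℕ):ℤ)) k : ℤ)):ℚ) * (X k * pderiv k B)) := by
      intro k
      rw [C_sub, C_mul, smul_eq_C_mul, smul_eq_C_mul]
      push_cast
      ring
    rw [Finset.sum_congr rfl fun k _ => expand k, Finset.sum_sub_distrib,
      ← Finset.smul_sum, ← Finset.smul_sum, h1, h2, smul_smul, smul_smul, ← sub_smul]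
    congr 1
    push_cast
    ring
  have hcl := comm_lemma (n := n) B
  rw [key, sub_eq_iff_eq_add] at hcl
  exact hcl.trans (add_comm _ _)

lemma Δop_smul (c : ℚ) (B : MvPolynomial (Fin (n+1)) ℚ) :
    Δop n (c • B) = c • Δop n B := by
  rw [Δop, Δop, Finset.smul_sum]
  refine Finset.sum_congr rfl fun i _ => ?_
  rw [(pderiv i.castSucc).map_smul]
  rw [mul_smul_comm]

lemma Δop_zero : Δop n (0 : MvPolynomial (Fin (n+1)) ℚ) = 0 := by
  simp [Δop]

lemma Dop_zero : Dop n (0 : MvPolynomial (Fin (n+1)) ℚ) = 0 := by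
  simp [Dop]

/-- If `I` is homogeneous of degree `g` and isobaric of weight `p` with
`n·g = 2·p`, and `D I = 0`, then also `Δ I = 0`. -/
theorem Δop_eq_zero_of_Dop_eq_zero (n g p : ℕ)
    (I : MvPolynomial (Fin (n + 1)) ℚ)
    (hg : I.IsHomogeneous g) (hp : I.IsWeightedHomogeneous (wt n) p)
    (hng : n * g = 2 * p) (hD : Dop n I = 0) :
    Δop n I = 0 := by
  have hone0 : I.IsWeightedHomogeneous (fun _ : Fin (n+1) => (1:ℤ)) (g:ℤ) := by
    have := toZwt (w := (1 : Fin (n+1) → ℕ)) hg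
    simpa using this
  have hwz0 : I.IsWeightedHomogeneous (fun i : Fin (n+1) => ((i:ℕ):ℤ)) (p:ℤ) := by
    have := toZwt hp
    simpa [wt] using this
  have hJone : ∀ k, ((Δop n)^[k] I).IsWeightedHomogeneous (fun _ : Fin (n+1) => (1:ℤ)) (g:ℤ) := by
    intro k
    induction k with
    | zero => exact hone0
    | succ k ih =>
      rw [Function.iterate_succ_apply']
      have := Δop_wtd (fun _ : Fin (n+1) => (1:ℤ)) 0 (fun i => by ring) ih
      simpa using this
  have hJwz : ∀ k, ((Δop n)^[k] I).IsWeightedHomogeneous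
      (fun i : Fin (n+1) => ((i:ℕ):ℤ)) ((p:ℤ) + k) := by
    intro k
    induction k with
    | zero => simpa using hwz0
    | succ k ih =>
      rw [Function.iterate_succ_apply']
      have := Δop_wtd (fun i : Fin (n+1) => ((i:ℕ):ℤ)) 1
        (fun i => by simp [Fin.val_succ, Fin.coe_castSucc]) ih
      rw [show (p:ℤ) + k + 1 = (p:ℤ) + (k+1 : ℕ) by push_cast; ring] at this
      exact this
  have hz : (n:ℤ) * (g:ℤ) = 2 * (p:ℤ) := by exact_mod_cast hng
  have hkey : ∀ k : ℕ, Dop n ((Δop n)^[k+1] I)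
      = (-((k:ℚ)+1) * (k:ℚ)) • (Δop n)^[k] I := by
    intro k
    induction k with
    | zero =>
      rw [Function.iterate_one, comm_eval hone0 hwz0, hD, Δop_zero]
      rw [show ((n:ℤ) * (g:ℤ) - 2 * (p:ℤ)) = 0 by omega]
      simp
    | succ k ih =>
      rw [Function.iterate_succ_apply' (Δop n) (k+1) I]
      rw [comm_eval (hJone (k+1)) (hJwz (k+1)), ih, Δop_smul,
        ← Function.iterate_succ_apply' (Δop n) k I]
      rw [show ((n:ℤ) * (g:ℤ) - 2 * ((p:ℤ) + ((k:ℕ)+1 : ℕ))) = -2 * ((k:ℤ)+1) by push_cast; omega]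
      rw [← add_smul]
      congr 1
      push_cast
      ring
  have hbigvanish : ∀ k, n*g+1 ≤ k → (Δop n)^[k] I = 0 := by
    intro k hk
    apply vanish (hJone k) (hJwz k)
    have hcast : ((n*g : ℕ) : ℤ) = (n:ℤ) * (g:ℤ) := by push_cast; ring
    rw [← hcast]
    have : ((n*g : ℕ) : ℤ) ≤ (k:ℤ) - 1 := by
      have : (n*g : ℕ) ≤ k - 1 := by omega
      omega
    omega
  have hdown : ∀ m k, 1 ≤ k → n*g+1 ≤ k + m → (Δop n)^[k] I = 0 := by
    intro m
    induction m with
    | zero => intro k hk hle; exact hbigvanish k (by omega)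
    | succ m ih =>
      intro k hk hle
      by_cases hbig : n*g+1 ≤ k
      · exact hbigvanish k hbig
      · have h1 : (Δop n)^[k+1] I = 0 := ih (k+1) (by omega) (by omega)
        have h2 := hkey k
        rw [h1, Dop_zero] at h2
        have hkpos : (0:ℚ) < (k:ℚ) := by
          exact_mod_cast Nat.pos_of_ne_zero (by omega)
        have hc : (-((k:ℚ)+1) * (k:ℚ)) ≠ 0 := by nlinarith
        have h3 : (Δop n)^[k] I
            = (-((k:ℚ)+1) * (k:ℚ))⁻¹ • ((-((k:ℚ)+1) * (k:ℚ)) • (Δop n)^[k] I) := by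
          rw [smul_smul, inv_mul_cancel₀ hc, one_smul]
        rw [h3, ← h2, smul_zero]
  have := hdown (n*g+1) 1 le_rfl (by omega)
  simpa using this
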